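/- Let X ⊂ ℙ^N be an irreducible variety of dimension n ≤ N/2 such that every point of X has at most n zero coordinates (i.e. X ∩ Δ_{N−n−1} = ∅, where Δ_k is the set of points with at most k+1 nonzero coordinates). Then for every r ≥ 2 with rn ≤ N, the r-fold Hadamard product map X^r → ℙ^N is everywhere defined and its image is Zariski closed; consequently X^{⋆r} = {p_1 ⋆ ⋯ ⋆ p_r : p_i ∈ X}, and every point of X^{⋆r} not in ∪_{s<r}(X ∪ X^{⋆2} ∪ ⋯ ∪ X^{⋆s}) has border Hadamard-X-rank equal to Hadamard-X-rank equal to r. -/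

import Mathlib

open MvPolynomial

/-- A polynomial vanishes identically on a set of points of affine space. -/
def vanishesOn {n : ℕ} (f : MvPolynomial (Fin n) ℂ) (S : Set (Fin n → ℂ)) : Prop :=
  ∀ v ∈ S, MvPolynomial.eval v f = 0

/-- Zariski closure of a set of points: the zero locus of its vanishing ideal. -/
def zclosure {n : ℕ} (S : Set (Fin n → ℂ)) : Set (Fin n → ℂ) :=
  {v | ∀ f : MvPolynomial (Fin n) ℂ, vanishesOn f S → MvPolynomial.eval v f = 0}

/-- Zariski-irreducibility: nonempty and the vanishing ideal is prime. -/
def ZIrred {n : ℕ} (S : Set (Fin n → ℂ)) : Prop :=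
  S.Nonempty ∧ ∀ f g : MvPolynomial (Fin n) ℂ,
    vanishesOn (f * g) S → vanishesOn f S ∨ vanishesOn g S

/-- Krull dimension of (the Zariski closure of) a set, as the order-theoretic
Krull dimension of chains of irreducible Zariski-closed subsets of it. -/
noncomputable def zdim {n : ℕ} (S : Set (Fin n → ℂ)) : WithBot ℕ∞ :=
  Order.krullDim {T : Set (Fin n → ℂ) // zclosure T = T ∧ ZIrred T ∧ T ⊆ zclosure S}

/-- Projective equality of coordinate vectors: equality up to a nonzero scalar. -/
def ProjEq {n : ℕ} (v w : Fin n → ℂ) : Prop :=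
  ∃ c : ℂ, c ≠ 0 ∧ w = c • v

/-- The set of (representatives of) Hadamard products of `m` points of `X`. -/
def hprodSet {n : ℕ} (X : Set (Fin n → ℂ)) (m : ℕ) : Set (Fin n → ℂ) :=
  {p | ∃ f : Fin m → (Fin n → ℂ), (∀ i, f i ∈ X) ∧ ProjEq (∏ i, f i) p}

/-- The `m`-th Hadamard power of `X`: the Zariski closure of the set of Hadamard
products of `m` points of `X`. -/
def hpow {n : ℕ} (X : Set (Fin n → ℂ)) (m : ℕ) : Set (Fin n → ℂ) :=
  zclosure (hprodSet X m)

/-- `p` is an (actual) Hadamard product of `m` points of `X`. -/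
def HadDecomp {n : ℕ} (X : Set (Fin n → ℂ)) (m : ℕ) (p : Fin n → ℂ) : Prop :=
  p ∈ hprodSet X m

/-- The Hadamard-`X`-rank of `p` is at most `r` (and finite, in particular). -/
def HrkLe {n : ℕ} (X : Set (Fin n → ℂ)) (r : ℕ) (p : Fin n → ℂ) : Prop :=
  ∃ m, 1 ≤ m ∧ m ≤ r ∧ HadDecomp X m p

/-- The Hadamard-`X`-rank of `p` is exactly `r`. -/
def HrkEq {n : ℕ} (X : Set (Fin n → ℂ)) (r : ℕ) (p : Fin n → ℂ) : Prop :=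
  HadDecomp X r p ∧ ∀ m, 1 ≤ m → m < r → ¬ HadDecomp X m p

/-- The Hadamard-`X`-rank of `p` is finite. -/
def HrkFin {n : ℕ} (X : Set (Fin n → ℂ)) (p : Fin n → ℂ) : Prop :=
  ∃ m, 1 ≤ m ∧ HadDecomp X m p

/-- `X ⊂ ℙ^{n-1}` is strongly concise: for each coordinate `i` there is a point of `X`
whose `i`-th coordinate vanishes and all other coordinates are nonzero. -/
def StronglyConcise {n : ℕ} (X : Set (Fin n → ℂ)) : Prop :=
  ∀ i : Fin n, ∃ v ∈ X, v i = 0 ∧ ∀ j ≠ i, v j ≠ 0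

set_option linter.unusedSectionVars false
set_option linter.unusedVariables false
set_option maxHeartbeats 1000000
set_option synthInstance.maxHeartbeats 1000000

namespace S14


variable {σ : Type*} [Fintype σ] [DecidableEq σ]

open Classical in
/-- filter the monomials of a polynomial by a predicate on exponents -/
noncomputable def fil (P : (σ →₀ ℕ) → Prop) (h : MvPolynomial σ ℂ) : MvPolynomial σ ℂ :=
  ∑ m ∈ h.support, if P m then monomial m (coeff m h) else 0

theorem coeff_fil_pos {P : (σ →₀ ℕ) → Prop} (h : MvPolynomial σ ℂ) {m : σ →₀ ℕ}
    (hP : P m) : coeff m (fil P h) = coeff m h := by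
  classical
  unfold fil
  rw [coeff_sum]
  by_cases hm : m ∈ h.support
  · rw [Finset.sum_eq_single m]
    · simp [hP, coeff_monomial]
    · intro b _ hbm
      split_ifs <;> simp [coeff_monomial, hbm]
    · intro h'; exact absurd hm h'
  · have h0 : coeff m h = 0 := by simpa using hm
    rw [h0]
    apply Finset.sum_eq_zero
    intro b hb
    split_ifs with h1
    · rw [coeff_monomial]
      split_ifs with h2
      · subst h2; exact h0
      · rfl
    · rfl

theorem coeff_fil_neg {P : (σ →₀ ℕ) → Prop} (h : MvPolynomial σ ℂ) {m : σ →₀ ℕ}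
    (hP : ¬ P m) : coeff m (fil P h) = 0 := by
  classical
  unfold fil
  rw [coeff_sum]
  apply Finset.sum_eq_zero
  intro b hb
  split_ifs with h1
  · rw [coeff_monomial]
    split_ifs with h2
    · exact absurd (h2 ▸ h1) hP
    · rfl
  · rfl

theorem fil_add (P : (σ →₀ ℕ) → Prop) (a b : MvPolynomial σ ℂ) :
    fil P (a + b) = fil P a + fil P b := by
  classical
  ext m
  by_cases hP : P m
  · simp [coeff_fil_pos _ hP, coeff_add]
  · simp [coeff_fil_neg _ hP, coeff_add]

theorem fil_zero (P : (σ →₀ ℕ) → Prop) : fil P (0 : MvPolynomial σ ℂ) = 0 := by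
  unfold fil; simp

/-- `fil` as an additive monoid hom. -/
noncomputable def filh (P : (σ →₀ ℕ) → Prop) : MvPolynomial σ ℂ →+ MvPolynomial σ ℂ where
  toFun := fil P
  map_zero' := fil_zero P
  map_add' := fil_add P

theorem fil_monomial (P : (σ →₀ ℕ) → Prop) (m : σ →₀ ℕ) (a : ℂ) (hP : P m) :
    fil P (monomial m a) = monomial m a := by
  classical
  ext m'
  by_cases h : P m'
  · rw [coeff_fil_pos _ h]
  · rw [coeff_fil_neg _ h, coeff_monomial]
    split_ifs with h2
    · exact absurd (h2 ▸ hP) h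
    · rfl

theorem fil_one (P : (σ →₀ ℕ) → Prop) (hP : P 0) : fil P (1 : MvPolynomial σ ℂ) = 1 := by
  have : (1 : MvPolynomial σ ℂ) = monomial 0 1 := by simp
  rw [this, fil_monomial P _ _ hP]

theorem fil_C_mul (P : (σ →₀ ℕ) → Prop) (c : ℂ) (q : MvPolynomial σ ℂ) :
    fil P (C c * q) = C c * fil P q := by
  ext m
  by_cases h : P m
  · rw [coeff_fil_pos _ h, coeff_C_mul, coeff_C_mul, coeff_fil_pos _ h]
  · rw [coeff_fil_neg _ h, coeff_C_mul, coeff_fil_neg _ h, mul_zero]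

theorem fil_monomial_mul (P P' : (σ →₀ ℕ) → Prop) (u : σ →₀ ℕ)
    (hiff : ∀ m, P (u + m) ↔ P' m) (q : MvPolynomial σ ℂ) :
    fil P (monomial u 1 * q) = monomial u 1 * fil P' q := by
  ext m
  by_cases h : P m
  · rw [coeff_fil_pos _ h, coeff_monomial_mul', coeff_monomial_mul']
    split_ifs with hle
    · rw [coeff_fil_pos]
      have hum : u + (m - u) = m := add_tsub_cancel_of_le hle
      rw [← hum] at h
      exact (hiff (m - u)).mp h
    · rfl
  · rw [coeff_fil_neg _ h, coeff_monomial_mul']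
    split_ifs with hle
    · rw [coeff_fil_neg, mul_zero]
      intro hP'
      have hum : u + (m - u) = m := add_tsub_cancel_of_le hle
      rw [← hum] at h
      exact h ((hiff (m - u)).mpr hP')
    · rfl

theorem support_fil {P : (σ →₀ ℕ) → Prop} {h : MvPolynomial σ ℂ} {m : σ →₀ ℕ}
    (hm : m ∈ (fil P h).support) : P m := by
  by_contra hP
  exact (mem_support_iff.mp hm) (coeff_fil_neg _ hP)


variable {ι τ : Type*} [Fintype ι] [Fintype τ] [DecidableEq ι] [DecidableEq τ]

/-- block degree -/
def bdeg (m : (ι × τ) →₀ ℕ) (i : ι) : ℕ := ∑ j : τ, m (i, j)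

theorem bdeg_add (a b : (ι × τ) →₀ ℕ) (i : ι) : bdeg (a + b) i = bdeg a i + bdeg b i := by
  unfold bdeg
  simp [Finset.sum_add_distrib]

/-- the exponent of the monomial `∏ i, X (i, J i)` -/
noncomputable def ue (J : ι → τ) : (ι × τ) →₀ ℕ := ∑ i : ι, Finsupp.single (i, J i) 1

theorem bdeg_single (s : ι × τ) (i : ι) :
    bdeg (Finsupp.single s (1:ℕ)) i = if s.1 = i then 1 else 0 := by
  unfold bdeg
  rcases s with ⟨a, b⟩
  split_ifs with h
  · subst h
    rw [Finset.sum_eq_single b]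
    · simp [Finsupp.single_apply]
    · intro j _ hj
      rw [Finsupp.single_apply, if_neg]
      simp only [Prod.mk.injEq]
      tauto
    · simp
  · apply Finset.sum_eq_zero
    intro j _
    rw [Finsupp.single_apply, if_neg]
    simp only [Prod.mk.injEq]
    tauto

theorem bdeg_sum {γ : Type*} (s : Finset γ) (f : γ → ((ι × τ) →₀ ℕ)) (i : ι) :
    bdeg (∑ g ∈ s, f g) i = ∑ g ∈ s, bdeg (f g) i := by
  classical
  induction s using Finset.induction_on with
  | empty => simp [bdeg]
  | insert _ _ hx ih => rename_i a t; rw [Finset.sum_insert hx, bdeg_add, ih, Finset.sum_insert hx]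

theorem bdeg_ue (J : ι → τ) (i : ι) : bdeg (ue J) i = 1 := by
  unfold ue
  rw [bdeg_sum]
  rw [Finset.sum_eq_single i] <;> simp +contextual [bdeg_single]

theorem prod_monomial_one {γ : Type*} (s : Finset γ) (f : γ → ((ι × τ) →₀ ℕ)) :
    (∏ g ∈ s, monomial (f g) (1:ℂ)) = monomial (∑ g ∈ s, f g) (1:ℂ) := by
  classical
  induction s using Finset.induction_on with
  | empty => simp
  | insert _ _ hx ih =>
      rename_i a t
      rw [Finset.prod_insert hx, ih, monomial_mul, Finset.sum_insert hx, one_mul]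

theorem prod_X_eq_monomial_ue (J : ι → τ) :
    (∏ i : ι, (X (i, J i) : MvPolynomial (ι × τ) ℂ)) = monomial (ue J) 1 := by
  rw [show (fun i => (X (i, J i) : MvPolynomial (ι × τ) ℂ)) = fun i => monomial (Finsupp.single (i, J i) 1) 1 from rfl]
  exact prod_monomial_one _ _


noncomputable def bvec (m : (ι × τ) →₀ ℕ) : ι →₀ ℕ :=
  Finsupp.equivFunOnFinite.symm (fun i => bdeg m i)

@[simp] theorem bvec_apply (m : (ι × τ) →₀ ℕ) (i : ι) : bvec m i = bdeg m i := rfl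

theorem prod_X_fst_pow (m : (ι × τ) →₀ ℕ) :
    (∏ s : ι × τ, (X s.1 : MvPolynomial ι ℂ) ^ m s) = monomial (bvec m) 1 := by
  rw [Fintype.prod_prod_type]
  have h1 : ∀ i : ι, (∏ j : τ, (X i : MvPolynomial ι ℂ) ^ m (i, j)) = X i ^ bdeg m i := by
    intro i
    rw [Finset.prod_pow_eq_pow_sum]
    rfl
  simp only [h1]
  rw [← prod_X_pow_eq_monomial]
  symm
  apply Finset.prod_subset (Finset.subset_univ _)
  intro i _ hi
  have h0 : bvec m i = 0 := by simpa using hi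
  simp [h0]

theorem fil_vanishes {W : Set (ι × τ → ℂ)}
    (hW : ∀ x ∈ W, ∀ c : ι → ℂ, (∀ i, c i ≠ 0) → (fun s : ι × τ => c s.1 * x s) ∈ W)
    {h : MvPolynomial (ι × τ) ℂ} (hh : ∀ x ∈ W, eval x h = 0)
    (D : Set (ι → ℕ)) {x : ι × τ → ℂ} (hx : x ∈ W) :
    eval x (fil (fun m => (fun i => bdeg m i) ∈ D) h) = 0 := by
  classical
  set P : ((ι × τ) →₀ ℕ) → Prop := fun m => (fun i => bdeg m i) ∈ D with hP
  set g : MvPolynomial ι ℂ := eval₂ C (fun s => C (x s) * X s.1) h with hgdef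
  set xpow : ((ι × τ) →₀ ℕ) → ℂ := fun m => ∏ s : ι × τ, x s ^ m s with hxpow
  -- step 1 : evaluation of g
  have step1 : ∀ c : ι → ℂ, eval c g = eval (fun s : ι × τ => c s.1 * x s) h := by
    intro c
    rw [hgdef, eval_eval₂]
    have h1 : (eval c).comp (C : ℂ →+* MvPolynomial ι ℂ) = RingHom.id ℂ :=
      RingHom.ext fun a => eval_C _
    rw [h1, eval₂_id]
    have h2 : (fun s : ι × τ => eval c (C (x s) * X s.1)) = fun s : ι × τ => c s.1 * x s := by
      funext s; simp [mul_comm]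
    rw [h2]
  -- step 2/3 : g = 0
  have hg : g = 0 := by
    have hG : (∏ i : ι, (X i : MvPolynomial ι ℂ)) * g = 0 := by
      apply MvPolynomial.funext
      intro c
      rw [map_mul, map_zero]
      by_cases hc : ∀ i, c i ≠ 0
      · rw [step1 c, hh _ (hW x hx c hc), mul_zero]
      · push_neg at hc
        obtain ⟨i, hi⟩ := hc
        have : eval c (∏ i : ι, (X i : MvPolynomial ι ℂ)) = 0 := by
          rw [map_prod]
          exact Finset.prod_eq_zero (Finset.mem_univ i) (by simpa using hi)
        rw [this, zero_mul]
    rcases mul_eq_zero.mp hG with h' | h'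
    · exfalso
      have : (∏ i : ι, (X i : MvPolynomial ι ℂ)) ≠ 0 :=
        Finset.prod_ne_zero_iff.mpr fun i _ => X_ne_zero _
      exact this h'
    · exact h'
  -- step 4 : g as a sum of monomials
  have hgsum : g = ∑ m ∈ h.support, monomial (bvec m) (coeff m h * xpow m) := by
    rw [hgdef, eval₂_eq']
    apply Finset.sum_congr rfl
    intro m _
    rw [show (∏ s : ι × τ, (C (x s) * X s.1) ^ m s)
        = (∏ s : ι × τ, (C (x s) : MvPolynomial ι ℂ) ^ m s) * ∏ s : ι × τ, (X s.1 : MvPolynomial ι ℂ) ^ m s by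
      rw [← Finset.prod_mul_distrib]; exact Finset.prod_congr rfl fun s _ => mul_pow _ _ _]
    have hC : (∏ s : ι × τ, (C (x s) : MvPolynomial ι ℂ) ^ m s) = C (xpow m) := by
      rw [hxpow]
      simp only [← C_pow, ← map_prod]
    rw [hC, prod_X_fst_pow, ← mul_assoc, ← C_mul, C_mul_monomial, mul_one]
  -- step 5 : fiberwise sums vanish
  have step5 : ∀ δ : ι →₀ ℕ,
      (∑ m ∈ h.support, if bvec m = δ then coeff m h * xpow m else 0) = 0 := by
    intro δ
    have h0 : (∑ m ∈ h.support, monomial (bvec m) (coeff m h * xpow m)) = 0 := hgsum ▸ hg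
    have := congrArg (coeff δ) h0
    rw [coeff_sum] at this
    simpa [coeff_monomial] using this
  -- step 6 : evaluation of fil
  have step6 : eval x (fil P h)
      = ∑ m ∈ h.support, if P m then coeff m h * xpow m else 0 := by
    unfold fil
    rw [map_sum]
    apply Finset.sum_congr rfl
    intro m _
    rw [apply_ite (eval x), map_zero, eval_monomial]
    congr 1
    rw [Finsupp.prod_fintype]
    intro s; exact pow_zero _
  rw [step6]
  -- step 7 : regroup the sum by bvec fibers
  rw [← Finset.sum_fiberwise_of_maps_to
    (fun m hm => Finset.mem_image_of_mem bvec hm)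
    (fun m => if P m then coeff m h * xpow m else 0)]
  apply Finset.sum_eq_zero
  intro δ hδ
  by_cases hD : (fun i => (δ : ι → ℕ) i) ∈ D
  · have : ∀ m ∈ h.support.filter (fun m => bvec m = δ), P m := by
      intro m hm
      have hbv : bvec m = δ := (Finset.mem_filter.mp hm).2
      have heq : (fun i => bdeg m i) = (fun i => (δ : ι → ℕ) i) := by
        funext i; rw [← bvec_apply, hbv]
      exact Set.mem_of_eq_of_mem heq hD
    rw [Finset.sum_congr rfl (fun m hm => if_pos (this m hm))]
    rw [Finset.sum_filter]
    exact step5 δ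
  · apply Finset.sum_eq_zero
    intro m hm
    have hbv : bvec m = δ := (Finset.mem_filter.mp hm).2
    have heq : (fun i => bdeg m i) = (fun i => (δ : ι → ℕ) i) := by
      funext i; rw [← bvec_apply, hbv]
    rw [if_neg]
    exact fun hPm => hD (Set.mem_of_eq_of_mem heq.symm hPm)


theorem fil_sub (P : (σ →₀ ℕ) → Prop) (a b : MvPolynomial σ ℂ) :
    fil P (a - b) = fil P a - fil P b :=
  map_sub (filh P) a b

theorem fil_sum (P : (σ →₀ ℕ) → Prop) {γ : Type*} (s : Finset γ) (f : γ → MvPolynomial σ ℂ) :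
    fil P (∑ g ∈ s, f g) = ∑ g ∈ s, fil P (f g) :=
  map_sum (filh P) f s


theorem bdeg_zero (i : ι) : bdeg (0 : (ι × τ) →₀ ℕ) i = 0 := by simp [bdeg]

theorem bdeg_smul (k : ℕ) (u : (ι × τ) →₀ ℕ) (i : ι) : bdeg (k • u) i = k * bdeg u i := by
  unfold bdeg
  rw [Finset.mul_sum]
  apply Finset.sum_congr rfl
  intro j _
  simp

theorem ue_apply (J : ι → τ) (s : ι × τ) : ue J s = if J s.1 = s.2 then 1 else 0 := by
  unfold ue
  rw [Finsupp.finset_sum_apply]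
  rcases s with ⟨a, b⟩
  by_cases h : J a = b
  · subst h
    rw [Finset.sum_eq_single a]
    · simp [Finsupp.single_apply]
    · intro i _ hne
      rw [Finsupp.single_apply, if_neg]
      rintro ⟨rfl, rfl⟩
      exact hne rfl
    · simp
  · rw [if_neg h]
    apply Finset.sum_eq_zero
    intro i _
    rw [Finsupp.single_apply, if_neg]
    rintro ⟨rfl, rfl⟩
    exact h rfl



/-- helper : eval of a composite -/
theorem eval_aeval_mv {α β : Type*} (x : β → ℂ) (f : α → MvPolynomial β ℂ)
    (g : MvPolynomial α ℂ) :
    eval x (aeval f g) = eval (fun a => eval x (f a)) g := by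
  rw [aeval_def, eval_eval₂]
  have h1 : (eval x).comp (algebraMap ℂ (MvPolynomial β ℂ)) = RingHom.id ℂ := by
    apply RingHom.ext
    intro a
    simp [MvPolynomial.algebraMap_eq]
  rw [h1, eval₂_id]

variable {N r : ℕ}

/-- the `i`-th block of a point of the big affine space -/
def bl (x : Fin r × Fin (N + 1) → ℂ) (i : Fin r) : Fin (N + 1) → ℂ := fun j => x (i, j)

/-- the product variety `(X ∪ {0})^r` inside the big affine space -/
def Wset (X : Set (Fin (N + 1) → ℂ)) (r : ℕ) : Set (Fin r × Fin (N + 1) → ℂ) :=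
  {x | ∀ i : Fin r, bl x i ∈ X ∪ {0}}

/-- the Hadamard product monomials -/
noncomputable def mu (N r : ℕ) (j : Fin (N + 1)) : MvPolynomial (Fin r × Fin (N + 1)) ℂ :=
  ∏ i : Fin r, X (i, j)

theorem eval_mu (x : Fin r × Fin (N + 1) → ℂ) (j : Fin (N + 1)) :
    eval x (mu N r j) = ∏ i : Fin r, x (i, j) := by
  unfold mu
  rw [map_prod]
  simp

theorem Wset_scale {X : Set (Fin (N + 1) → ℂ)}
    (hcone : ∀ v ∈ X, ∀ c : ℂ, c ≠ 0 → c • v ∈ X) :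
    ∀ x ∈ Wset X r, ∀ c : Fin r → ℂ, (∀ i, c i ≠ 0) →
      (fun s : Fin r × Fin (N + 1) => c s.1 * x s) ∈ Wset X r := by
  intro x hx c hc i
  rcases hx i with h | h
  · left
    have : bl (fun s : Fin r × Fin (N + 1) => c s.1 * x s) i = c i • bl x i := by
      funext j; rfl
    rw [this]
    exact hcone _ h _ (hc i)
  · right
    have h0 : bl x i = 0 := h
    have : bl (fun s : Fin r × Fin (N + 1) => c s.1 * x s) i = 0 := by
      funext j
      have : x (i, j) = 0 := congrFun h0 j
      simp [bl, this]
    exact this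

theorem Wset_zeroLocus {X : Set (Fin (N + 1) → ℂ)}
    (hcl : zclosure X = X ∪ {0}) :
    zeroLocus ℂ (vanishingIdeal ℂ (Wset X r)) = Wset X r := by
  apply le_antisymm
  · intro x hx i
    rw [← hcl]
    intro g hg
    have hmem : rename (fun j : Fin (N + 1) => ((i, j) : Fin r × Fin (N + 1))) g
        ∈ vanishingIdeal ℂ (Wset X r) := by
      rw [mem_vanishingIdeal_iff]
      intro w hw
      rw [aeval_eq_eval, eval_rename]
      rcases hw i with h | h
      · exact hg _ h
      · have h0 : bl w i = 0 := h
        have : (w ∘ fun j : Fin (N + 1) => ((i, j) : Fin r × Fin (N + 1))) = (0 : Fin (N+1) → ℂ) := h0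
        rw [this]
        -- 0 ∈ zclosure X since zclosure X = X ∪ {0}
        have h0cl : (0 : Fin (N+1) → ℂ) ∈ zclosure X := by rw [hcl]; right; rfl
        exact h0cl g hg
    have := hx _ hmem
    rw [aeval_eq_eval, eval_rename] at this
    exact this
  · exact zeroLocus_vanishingIdeal_le _

/-- counting : a common zero of all μ on W must have a zero block -/
theorem mu_common_zero {n : ℕ} {X : Set (Fin (N + 1) → ℂ)}
    (hzero : ∀ v ∈ X, Nat.card {i : Fin (N + 1) // v i = 0} ≤ n)
    (hrn : r * n ≤ N) {x : Fin r × Fin (N + 1) → ℂ} (hx : x ∈ Wset X r)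
    (hz : ∀ j, (∏ i : Fin r, x (i, j)) = 0) : ∃ i, bl x i = 0 := by
  classical
  by_contra hcon
  push_neg at hcon
  have hX : ∀ i, bl x i ∈ X := by
    intro i
    rcases hx i with h | h
    · exact h
    · exact absurd h (hcon i)
  -- each j lies in some Z_i
  have hcov : ∀ j : Fin (N + 1), ∃ i, x (i, j) = 0 := by
    intro j
    rcases Finset.prod_eq_zero_iff.mp (hz j) with ⟨i, _, hi⟩
    exact ⟨i, hi⟩
  set Z : Fin r → Finset (Fin (N + 1)) := fun i => Finset.univ.filter (fun j => x (i, j) = 0)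
  have hcard : ∀ i, (Z i).card ≤ n := by
    intro i
    have := hzero _ (hX i)
    rw [Nat.card_eq_fintype_card, Fintype.card_subtype] at this
    exact this
  have huniv : (Finset.univ : Finset (Fin (N + 1))) ⊆ Finset.univ.biUnion Z := by
    intro j _
    rcases hcov j with ⟨i, hi⟩
    exact Finset.mem_biUnion.mpr ⟨i, Finset.mem_univ i, by simp [Z, hi]⟩
  have h1 : N + 1 ≤ (Finset.univ.biUnion Z).card := by
    have := Finset.card_le_card huniv
    simpa using this
  have h2 : (Finset.univ.biUnion Z).card ≤ r * n := by
    calc (Finset.univ.biUnion Z).card ≤ ∑ i : Fin r, (Z i).card := Finset.card_biUnion_le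
    _ ≤ ∑ _i : Fin r, n := Finset.sum_le_sum fun i _ => hcard i
    _ = r * n := by simp [Finset.sum_const, mul_comm]
  omega

/-- every element of `hprodSet X r` is an honest product of elements of `W` -/
theorem hprod_surj {X : Set (Fin (N + 1) → ℂ)}
    (hcone : ∀ v ∈ X, ∀ c : ℂ, c ≠ 0 → c • v ∈ X) (hr : 1 ≤ r)
    {v : Fin (N + 1) → ℂ} (hv : v ∈ hprodSet X r) :
    ∃ x : Fin r × Fin (N + 1) → ℂ, (∀ i, bl x i ∈ X) ∧ ∀ j, (∏ i : Fin r, x (i, j)) = v j := by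
  classical
  obtain ⟨f, hf, c, hc0, hcv⟩ := hv
  have hi0 : (0 : ℕ) < r := hr
  set i₀ : Fin r := ⟨0, hi0⟩
  set f' : Fin r → Fin (N + 1) → ℂ := Function.update f i₀ (c • f i₀) with hf'
  refine ⟨fun s => f' s.1 s.2, ?_, ?_⟩
  · intro i
    by_cases h : i = i₀
    · subst h
      have : bl (fun s : Fin r × Fin (N+1) => f' s.1 s.2) i₀ = c • f i₀ := by
        funext j; simp [bl, f', Function.update_self]
      rw [this]
      exact hcone _ (hf i₀) _ hc0
    · have : bl (fun s : Fin r × Fin (N+1) => f' s.1 s.2) i = f i := by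
        funext j; simp [bl, f', Function.update_of_ne h]
      rw [this]
      exact hf i
  · intro j
    have hprod : (∏ i : Fin r, f' i j) = c * ∏ i : Fin r, f i j := by
      have h1 : ∀ i ∈ Finset.univ \ {i₀}, f' i j = f i j := by
        intro i hi
        have hne' : i ≠ i₀ := by
          rcases Finset.mem_sdiff.mp hi with ⟨_, h⟩
          simpa using h
        simp [f', Function.update_of_ne hne']
      have h2 : f' i₀ j = c * f i₀ j := by simp [f', Function.update_self]
      rw [Finset.prod_eq_prod_diff_singleton_mul (Finset.mem_univ i₀) (fun i => f' i j),
          Finset.prod_eq_prod_diff_singleton_mul (Finset.mem_univ i₀) (fun i => f i j), h2,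
          Finset.prod_congr rfl h1]
      ring
    calc (∏ i : Fin r, f' i j) = c * ∏ i : Fin r, f i j := hprod
    _ = v j := by
        have := congrFun hcv j
        rw [this]
        have : (∏ i : Fin r, f i) j = ∏ i : Fin r, f i j := by
          rw [Finset.prod_apply]
        rw [show (c • ∏ i : Fin r, f i) j = c * (∏ i : Fin r, f i) j from rfl, this]



/-- exact-degree-(d,…,d) selector -/
def Pdg {N r : ℕ} (d : ℕ) : ((Fin r × Fin (N + 1)) →₀ ℕ) → Prop :=
  fun m => (fun i => bdeg m i) ∈ {v : Fin r → ℕ | ∀ i, v i = d}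

/-- diagonal selector -/
def PDg {N r : ℕ} : ((Fin r × Fin (N + 1)) →₀ ℕ) → Prop :=
  fun m => (fun i => bdeg m i) ∈ {v : Fin r → ℕ | ∀ i i', v i = v i'}

theorem Pdg_iff {N r d : ℕ} (m : (Fin r × Fin (N + 1)) →₀ ℕ) :
    Pdg d m ↔ ∀ i, bdeg m i = d := Iff.rfl

theorem PDg_iff {N r : ℕ} (m : (Fin r × Fin (N + 1)) →₀ ℕ) :
    PDg m ↔ ∀ i i', bdeg m i = bdeg m i' := Iff.rfl

theorem PDg_zero {N r : ℕ} : PDg (0 : (Fin r × Fin (N + 1)) →₀ ℕ) := by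
  rw [PDg_iff]
  intro i i'
  rw [bdeg_zero, bdeg_zero]

theorem Pdg_shift {N r : ℕ} (J : Fin r → Fin (N + 1)) {d : ℕ} (hd : 1 ≤ d) :
    ∀ m, Pdg d (ue J + m) ↔ Pdg (d - 1) m := by
  intro m
  rw [Pdg_iff, Pdg_iff]
  constructor
  · intro h i
    have := h i
    rw [bdeg_add, bdeg_ue] at this
    omega
  · intro h i
    rw [bdeg_add, bdeg_ue, h i]
    omega

theorem PDg_shift {N r : ℕ} (J : Fin r → Fin (N + 1)) :
    ∀ m, PDg (ue J + m) ↔ PDg m := by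
  intro m
  rw [PDg_iff, PDg_iff]
  constructor
  · intro h i i'
    have := h i i'
    rw [bdeg_add, bdeg_add, bdeg_ue, bdeg_ue] at this
    omega
  · intro h i i'
    rw [bdeg_add, bdeg_add, bdeg_ue, bdeg_ue, h i i']

theorem mu_eq_monomial {N r : ℕ} (j : Fin (N + 1)) :
    mu N r j = monomial (ue fun _ : Fin r => j) 1 :=
  prod_X_eq_monomial_ue _

theorem claimA {N r n : ℕ} {X : Set (Fin (N + 1) → ℂ)}
    (hcone : ∀ v ∈ X, ∀ c : ℂ, c ≠ 0 → c • v ∈ X)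
    (hcl : zclosure X = X ∪ {0})
    (hzero : ∀ v ∈ X, Nat.card {i : Fin (N + 1) // v i = 0} ≤ n)
    (hr : 1 ≤ r) (hrn : r * n ≤ N)
    {p : Fin (N + 1) → ℂ}
    (hp : ∀ f, vanishesOn f (hprodSet X r) → eval p f = 0) :
    (1 : MvPolynomial (Fin r × Fin (N + 1)) ℂ) ∉
      (vanishingIdeal ℂ (Wset X r) ⊔ Ideal.span (Set.range fun j => mu N r j - C (p j))) := by
  classical
  intro h1K
  set R' := MvPolynomial (Fin r × Fin (N + 1)) ℂ with hR'
  set E' := MvPolynomial (Fin (N + 1)) ℂ with hE'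
  set I : Ideal R' := vanishingIdeal ℂ (Wset X r) with hI
  -- membership in I is vanishing on W
  have hWsc := Wset_scale (r := r) hcone
  have hIfil : ∀ (h : R') (D : Set (Fin r → ℕ)), h ∈ I →
      fil (fun m => (fun i => bdeg m i) ∈ D) h ∈ I := by
    intro h D hh
    rw [hI, mem_vanishingIdeal_iff]
    intro x hx
    exact fil_vanishes hWsc (fun y hy => (mem_vanishingIdeal_iff.mp hh) y hy) D hx
  -- decompose the assumed membership
  obtain ⟨h0, hh0, b, hb, hsum⟩ := Submodule.mem_sup.mp h1K
  rw [Ideal.mem_span_range_iff_exists_fun] at hb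
  obtain ⟨q, hq⟩ := hb
  -- Nullstellensatz certificates
  set K0 : Ideal R' := I ⊔ Ideal.span (Set.range (mu N r)) with hK0
  have hcert0 : ∀ J : Fin r → Fin (N + 1), ∃ e : ℕ,
      (monomial (ue J) (1 : ℂ)) ^ e ∈ K0 := by
    intro J
    have hvan : monomial (ue J) (1 : ℂ) ∈ vanishingIdeal ℂ (zeroLocus ℂ K0) := by
      rw [mem_vanishingIdeal_iff]
      intro x hx
      have hxW : x ∈ Wset X r := by
        have hx' : x ∈ zeroLocus ℂ I := zeroLocus_anti_mono le_sup_left hx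
        rw [← Wset_zeroLocus (r := r) hcl]
        exact hx'
      have hmu0 : ∀ j, (∏ i : Fin r, x (i, j)) = 0 := by
        intro j
        have hmem : mu N r j ∈ K0 := by
          apply Ideal.mem_sup_right
          exact Ideal.subset_span ⟨j, rfl⟩
        have := hx _ hmem
        rwa [aeval_eq_eval, eval_mu] at this
      obtain ⟨i0, hbl⟩ := mu_common_zero hzero hrn hxW hmu0
      rw [aeval_eq_eval, ← prod_X_eq_monomial_ue, map_prod]
      apply Finset.prod_eq_zero (Finset.mem_univ i0)
      rw [eval_X]
      exact congrFun hbl (J i0)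
    rw [vanishingIdeal_zeroLocus_eq_radical] at hvan
    exact hvan
  choose eJ heJ using hcert0
  set e := 1 + Finset.univ.sup eJ with he
  have he1 : 1 ≤ e := by omega
  have hcert : ∀ J : Fin r → Fin (N + 1), (monomial (ue J) (1 : ℂ)) ^ e ∈ K0 := by
    intro J
    have hle : eJ J ≤ e := by
      have := Finset.le_sup (f := eJ) (Finset.mem_univ J)
      omega
    have : (monomial (ue J) (1 : ℂ)) ^ e
        = (monomial (ue J) (1 : ℂ)) ^ eJ J * (monomial (ue J) (1 : ℂ)) ^ (e - eJ J) := by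
      rw [← pow_add]
      congr 1
      omega
    rw [this]
    exact Ideal.mul_mem_right _ _ (heJ J)
  -- quotient ring and algebra structure
  set mk : R' →+* R' ⧸ I := Ideal.Quotient.mk I with hmk
  set Φ : E' →+* R' := (aeval (mu N r) : E' →ₐ[ℂ] R').toRingHom with hΦ
  set Φb : E' →+* R' ⧸ I := mk.comp Φ with hΦb
  letI : Algebra E' (R' ⧸ I) := Φb.toAlgebra
  have hsmul : ∀ (g : E') (a : R' ⧸ I), g • a = mk (Φ g) * a := fun g a => rfl
  -- diagonal monomials and their span
  set DM : Set (R' ⧸ I) := {a | ∃ m, PDg m ∧ a = mk (monomial m 1)} with hDM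
  set Dsub : Submodule E' (R' ⧸ I) := Submodule.span E' DM with hDsub
  have hone_DM : (1 : R' ⧸ I) ∈ DM := by
    refine ⟨0, PDg_zero, ?_⟩
    rw [monomial_zero', map_one, map_one]
  -- multiplicativity of the span
  have hDMmul : ∀ x ∈ DM, ∀ y ∈ DM, x * y ∈ DM := by
    rintro x ⟨m1, h1, rfl⟩ y ⟨m2, h2, rfl⟩
    refine ⟨m1 + m2, ?_, ?_⟩
    · rw [PDg_iff]
      intro i i'
      rw [bdeg_add, bdeg_add, (PDg_iff m1).mp h1 i i', (PDg_iff m2).mp h2 i i']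
    · rw [← map_mul, monomial_mul, one_mul]
  have hDmul : ∀ a ∈ Dsub, ∀ b ∈ Dsub, a * b ∈ Dsub := by
    intro a ha
    induction ha using Submodule.span_induction with
    | mem x hx =>
      intro b hb
      induction hb using Submodule.span_induction with
      | mem y hy => exact Submodule.subset_span (hDMmul x hx y hy)
      | zero => rw [mul_zero]; exact Submodule.zero_mem _
      | add y z _ _ ih1 ih2 => rw [mul_add]; exact Submodule.add_mem _ ih1 ih2
      | smul g y _ ih =>
        have : x * (g • y) = g • (x * y) := by
          rw [hsmul, hsmul]; ring
        rw [this]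
        exact Submodule.smul_mem _ _ ih
    | zero => intro b _; rw [zero_mul]; exact Submodule.zero_mem _
    | add x y _ _ ih1 ih2 =>
      intro b hb
      rw [add_mul]
      exact Submodule.add_mem _ (ih1 b hb) (ih2 b hb)
    | smul g x _ ih =>
      intro b hb
      have : (g • x) * b = g • (x * b) := by
        rw [hsmul, hsmul]; ring
      rw [this]
      exact Submodule.smul_mem _ _ (ih b hb)
  -- span is generated by the finitely many low-degree diagonal monomials
  set G : Set (R' ⧸ I) := {a | ∃ m, PDg m ∧ bdeg m ⟨0, hr⟩ < e * (N + 1) ∧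
      a = mk (monomial m 1)} with hG
  have hGfin : G.Finite := by
    set M0 : (Fin r × Fin (N + 1)) →₀ ℕ :=
      Finsupp.equivFunOnFinite.symm (fun _ => e * (N + 1)) with hM0
    have hsub : G ⊆ (fun m : (Fin r × Fin (N + 1)) →₀ ℕ => mk (monomial m 1)) ''
        (Set.Icc 0 M0) := by
      rintro a ⟨m, hm, hlt, rfl⟩
      refine ⟨m, ⟨zero_le, ?_⟩, rfl⟩
      rw [Finsupp.le_def]
      intro s
      have h1 : m s ≤ bdeg m s.1 := by
        have : m s = m (s.1, s.2) := by rw [Prod.mk.eta]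
        rw [this]
        exact Finset.single_le_sum (f := fun j => m (s.1, j)) (fun _ _ => Nat.zero_le _)
          (Finset.mem_univ s.2)
      have h2 : bdeg m s.1 = bdeg m ⟨0, hr⟩ := (PDg_iff m).mp hm s.1 ⟨0, hr⟩
      have h3 : M0 s = e * (N + 1) := rfl
      omega
    exact Set.Finite.subset (Set.Finite.image _ (Set.finite_Icc _ _)) hsub
  have hkey : ∀ d : ℕ, ∀ m : (Fin r × Fin (N + 1)) →₀ ℕ, (∀ i, bdeg m i = d) →
      mk (monomial m 1) ∈ Submodule.span E' G := by
    intro d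
    induction d using Nat.strong_induction_on with
    | _ d IH =>
      intro m hm
      by_cases hd : d < e * (N + 1)
      · apply Submodule.subset_span
        refine ⟨m, ?_, ?_, rfl⟩
        · rw [PDg_iff]
          intro i i'
          rw [hm i, hm i']
        · rw [hm ⟨0, hr⟩]; exact hd
      · push_neg at hd
        have hd1 : 1 ≤ d := le_trans (by nlinarith) hd
        have hJ : ∀ i : Fin r, ∃ j, e ≤ m (i, j) := by
          intro i
          by_contra hcon
          push_neg at hcon
          have hb : bdeg m i ≤ (N + 1) * (e - 1) := by
            calc bdeg m i = ∑ j : Fin (N + 1), m (i, j) := rfl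
            _ ≤ ∑ _j : Fin (N + 1), (e - 1) := Finset.sum_le_sum fun j _ => by
                have := hcon j; omega
            _ = (N + 1) * (e - 1) := by
                rw [Finset.sum_const, Finset.card_univ, Fintype.card_fin, smul_eq_mul]
          rw [hm i] at hb
          have h1 : (N + 1) * (e - 1) + (N + 1) = (N + 1) * e := by
            rw [← Nat.mul_succ]
            congr 1
            omega
          have h2 : e * (N + 1) = (N + 1) * e := Nat.mul_comm _ _
          omega
        choose J hJe using hJ
        set u := ue J with hu
        have hleu : e • u ≤ m := by
          rw [Finsupp.le_def]
          intro s
          rw [Finsupp.smul_apply, smul_eq_mul, hu, ue_apply]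
          split_ifs with hJs
          · rw [mul_one]
            have := hJe s.1
            rw [show ((s.1, J s.1) : Fin r × Fin (N + 1)) = s by rw [hJs, Prod.mk.eta]] at this
            exact this
          · rw [mul_zero]; exact Nat.zero_le _
        set m' := m - e • u with hm'd
        have hmm : e • u + m' = m := add_tsub_cancel_of_le hleu
        obtain ⟨h1, hh1, b1, hb1, hsum1⟩ := Submodule.mem_sup.mp (hcert J)
        rw [Ideal.mem_span_range_iff_exists_fun] at hb1
        obtain ⟨q1, hq1⟩ := hb1
        have hfact : (monomial m (1 : ℂ)) = (monomial u 1) ^ e * monomial m' 1 := by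
          rw [monomial_pow, one_pow, monomial_mul, one_mul, hmm]
        have heq2 : (monomial m (1 : ℂ))
            = h1 * monomial m' 1 + ∑ j : Fin (N + 1), mu N r j * (q1 j * monomial m' 1) := by
          rw [hfact, ← hsum1, add_mul]
          congr 1
          rw [← hq1, Finset.sum_mul]
          apply Finset.sum_congr rfl
          intro j _
          ring
        have hfil := congrArg (fil (Pdg d)) heq2
        rw [fil_monomial _ _ _ (show Pdg d m from hm), fil_add, fil_sum] at hfil
        have hterm1 : ∀ j : Fin (N + 1), fil (Pdg d) (mu N r j * (q1 j * monomial m' 1))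
            = mu N r j * fil (Pdg (d - 1)) (q1 j * monomial m' 1) := by
          intro j
          rw [mu_eq_monomial]
          exact fil_monomial_mul _ _ _ (Pdg_shift _ hd1) _
        rw [Finset.sum_congr rfl (fun j _ => hterm1 j)] at hfil
        have hAeq := congrArg mk hfil
        have h0fil2 : mk (fil (Pdg d) (h1 * monomial m' 1)) = 0 :=
          Ideal.Quotient.eq_zero_iff_mem.mpr
            (hIfil _ {v : Fin r → ℕ | ∀ i, v i = d} (Ideal.mul_mem_right _ _ hh1))
        rw [map_add, map_sum, h0fil2, zero_add] at hAeq
        rw [hAeq]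
        apply Submodule.sum_mem
        intro j _
        set cj := fil (Pdg (d - 1)) (q1 j * monomial m' 1) with hcj
        have hcjmem : mk cj ∈ Submodule.span E' G := by
          have hrw : mk cj = ∑ m'' ∈ cj.support, mk (monomial m'' (coeff m'' cj)) := by
            rw [← map_sum]
            congr 1
            exact as_sum cj
          rw [hrw]
          apply Submodule.sum_mem
          intro m'' hm''
          have hPd : Pdg (d - 1) m'' := support_fil hm''
          have hsm : mk (monomial m'' (coeff m'' cj))
              = (C (coeff m'' cj) : E') • mk (monomial m'' 1) := by
            rw [hsmul]
            have hΦC : Φ (C (coeff m'' cj)) = C (coeff m'' cj) := by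
              rw [hΦ]
              show aeval (mu N r) (C (coeff m'' cj)) = C (coeff m'' cj)
              rw [aeval_C, algebraMap_eq]
            rw [hΦC, ← map_mul, C_mul_monomial, mul_one]
          rw [hsm]
          exact Submodule.smul_mem _ _ (IH (d - 1) (by omega) m'' hPd)
        have hXsm : mk (mu N r j * cj) = (MvPolynomial.X j : E') • mk cj := by
          rw [map_mul, hsmul]
          have hXj : Φ (MvPolynomial.X j : E') = mu N r j := by
            rw [hΦ]
            show aeval (mu N r) (MvPolynomial.X j : E') = mu N r j
            rw [aeval_X]
          rw [hXj]
        rw [hXsm]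
        exact Submodule.smul_mem _ _ hcjmem
  have hDspan : Dsub = Submodule.span E' G := by
    apply le_antisymm
    · rw [hDsub]
      rw [Submodule.span_le]
      rintro a ⟨m, hm, rfl⟩
      exact hkey (bdeg m ⟨0, hr⟩) m (fun i => (PDg_iff m).mp hm i ⟨0, hr⟩)
    · apply Submodule.span_mono
      rintro a ⟨m, hm, _, rfl⟩
      exact ⟨m, hm, rfl⟩
  have hDfg : Dsub.FG := by
    rw [hDspan]
    exact Submodule.fg_span hGfin
  -- the maximal ideal at p
  set mI : Ideal E' := Ideal.span (Set.range fun j => (MvPolynomial.X j : E') - C (p j)) with hmI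
  -- 1 belongs to mI • Dsub
  -- the image under mk of a `fil` polynomial lies in the span of its monomials
  have hfilDsub : ∀ z : R', mk (fil PDg z) ∈ Dsub := by
    intro z
    set c := fil PDg z with hc
    have hrw : mk c = ∑ m'' ∈ c.support, mk (monomial m'' (coeff m'' c)) := by
      rw [← map_sum]
      congr 1
      exact as_sum c
    rw [hrw]
    apply Submodule.sum_mem
    intro m'' hm''
    have hPd : PDg m'' := support_fil hm''
    have hsm : mk (monomial m'' (coeff m'' c))
        = (C (coeff m'' c) : E') • mk (monomial m'' 1) := by
      rw [hsmul]
      have hΦC : Φ (C (coeff m'' c)) = C (coeff m'' c) := by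
        rw [hΦ]
        show aeval (mu N r) (C (coeff m'' c)) = C (coeff m'' c)
        rw [aeval_C, algebraMap_eq]
      rw [hΦC, ← map_mul, C_mul_monomial, mul_one]
    rw [hsm]
    exact Submodule.smul_mem _ _ (Submodule.subset_span ⟨m'', hPd, rfl⟩)
  have hμsmul : ∀ (j : Fin (N + 1)) (w : R' ⧸ I),
      mk (mu N r j) * w - mk (C (p j)) * w = ((MvPolynomial.X j : E') - C (p j)) • w := by
    intro j w
    rw [hsmul]
    have hΦj : Φ ((MvPolynomial.X j : E') - C (p j)) = mu N r j - C (p j) := by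
      rw [hΦ]
      show aeval (mu N r) ((MvPolynomial.X j : E') - C (p j)) = mu N r j - C (p j)
      rw [map_sub, aeval_X, aeval_C, algebraMap_eq]
    rw [hΦj, map_sub, sub_mul]
  have hone_mem : (1 : R' ⧸ I) ∈ mI • Dsub := by
    have heq : (1 : R') = h0 + ∑ j : Fin (N + 1), q j * (mu N r j - C (p j)) := by
      rw [hq, hsum]
    have hπ := congrArg (fil PDg) heq
    rw [fil_one _ PDg_zero, fil_add, fil_sum] at hπ
    have hterm : ∀ j : Fin (N + 1), fil PDg (q j * (mu N r j - C (p j)))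
        = mu N r j * fil PDg (q j) - C (p j) * fil PDg (q j) := by
      intro j
      rw [show q j * (mu N r j - C (p j)) = mu N r j * q j - C (p j) * q j by ring]
      rw [fil_sub, fil_C_mul, mu_eq_monomial,
        fil_monomial_mul PDg PDg _ (PDg_shift _) (q j), ← mu_eq_monomial]
    rw [Finset.sum_congr rfl (fun j _ => hterm j)] at hπ
    have hA := congrArg mk hπ
    rw [map_one, map_add, map_sum] at hA
    have h0fil : mk (fil PDg h0) = 0 :=
      Ideal.Quotient.eq_zero_iff_mem.mpr (hIfil h0 {v : Fin r → ℕ | ∀ i i', v i = v i'} hh0)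
    rw [h0fil, zero_add] at hA
    rw [hA]
    apply Submodule.sum_mem
    intro j _
    rw [map_sub, map_mul, map_mul, hμsmul j (mk (fil PDg (q j)))]
    exact Submodule.smul_mem_smul (Ideal.subset_span ⟨j, rfl⟩) (hfilDsub (q j))
  have hle : Dsub ≤ mI • Dsub := by
    intro z hz
    have : z * (1 : R' ⧸ I) ∈ mI • Dsub := by
      refine Submodule.smul_induction_on hone_mem ?_ ?_
      · intro g hg w hw
        have : z * (g • w) = g • (z * w) := by
          rw [hsmul, hsmul]
          ring
        rw [this]
        exact Submodule.smul_mem_smul hg (hDmul z hz w hw)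
      · intro t1 t2 h1 h2
        rw [mul_add]
        exact Submodule.add_mem _ h1 h2
    rwa [mul_one] at this
  -- Nakayama
  obtain ⟨g, hg1, hgz⟩ :=
    Submodule.exists_sub_one_mem_and_smul_eq_zero_of_fg_of_le_smul mI Dsub hDfg hle
  have h1D : (1 : R' ⧸ I) ∈ Dsub := Submodule.subset_span hone_DM
  have hΦg : Φ g ∈ I := by
    have := hgz 1 h1D
    rw [hsmul, mul_one] at this
    exact Ideal.Quotient.eq_zero_iff_mem.mp this
  -- evaluation at p : contradiction
  have heval0 : eval p g = 0 := by
    apply hp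
    intro v hv
    obtain ⟨x, hxX, hxv⟩ := hprod_surj hcone hr hv
    have hxW : x ∈ Wset X r := fun i => Or.inl (hxX i)
    have h1 : eval x (Φ g) = 0 := (mem_vanishingIdeal_iff.mp hΦg) x hxW
    have h2 : eval x (Φ g) = eval (fun j => eval x (mu N r j)) g := eval_aeval_mv x (mu N r) g
    have h3 : (fun j => eval x (mu N r j)) = v := by
      funext j
      rw [eval_mu, hxv j]
    rw [h2, h3] at h1
    exact h1
  have hker : ∀ h ∈ mI, eval p h = 0 := by
    intro h hh
    rw [hmI] at hh
    have hle2 : Ideal.span (Set.range fun j => (MvPolynomial.X j : E') - C (p j))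
        ≤ RingHom.ker (eval p : E' →+* ℂ) := by
      rw [Ideal.span_le]
      rintro _ ⟨j, rfl⟩
      rw [SetLike.mem_coe, RingHom.mem_ker, map_sub, eval_X, eval_C, sub_self]
    exact hle2 hh
  have hfin := hker _ hg1
  rw [map_sub, map_one, heval0] at hfin
  norm_num at hfin


theorem hardDir {N r n : ℕ} {X : Set (Fin (N + 1) → ℂ)}
    (hcone : ∀ v ∈ X, ∀ c : ℂ, c ≠ 0 → c • v ∈ X)
    (hcl : zclosure X = X ∪ {0})
    (hzero : ∀ v ∈ X, Nat.card {i : Fin (N + 1) // v i = 0} ≤ n)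
    (hr : 1 ≤ r) (hrn : r * n ≤ N)
    {p : Fin (N + 1) → ℂ} (hp0 : p ≠ 0)
    (hp : ∀ f, vanishesOn f (hprodSet X r) → eval p f = 0) :
    p ∈ hprodSet X r := by
  classical
  have hA := claimA hcone hcl hzero hr hrn hp
  set K' := vanishingIdeal ℂ (Wset X r) ⊔
    Ideal.span (Set.range fun j => mu N r j - C (p j)) with hK'
  have hnonempty : ∃ x, x ∈ zeroLocus ℂ K' := by
    by_contra hcon
    push_neg at hcon
    have hempty : zeroLocus ℂ K' = ∅ := Set.eq_empty_iff_forall_notMem.mpr hcon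
    have hrad := vanishingIdeal_zeroLocus_eq_radical (K := ℂ) K'
    rw [hempty] at hrad
    rw [vanishingIdeal_empty] at hrad
    have h1 : (1 : MvPolynomial (Fin r × Fin (N + 1)) ℂ) ∈ K'.radical := by
      rw [← hrad]; trivial
    obtain ⟨k, hk⟩ := h1
    rw [one_pow] at hk
    exact hA hk
  obtain ⟨x, hx⟩ := hnonempty
  have hxW : x ∈ Wset X r := by
    have hx' : x ∈ zeroLocus ℂ (vanishingIdeal ℂ (Wset X r)) :=
      zeroLocus_anti_mono le_sup_left hx
    rwa [Wset_zeroLocus hcl] at hx'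
  have hxmu : ∀ j, (∏ i : Fin r, x (i, j)) = p j := by
    intro j
    have hmem : mu N r j - C (p j) ∈ K' := Ideal.mem_sup_right (Ideal.subset_span ⟨j, rfl⟩)
    have hz := hx _ hmem
    rw [aeval_eq_eval, map_sub, eval_mu, eval_C, sub_eq_zero] at hz
    exact hz
  have hXblocks : ∀ i, bl x i ∈ X := by
    intro i
    rcases hxW i with h | h
    · exact h
    · exfalso
      apply hp0
      funext j
      rw [← hxmu j]
      exact Finset.prod_eq_zero (Finset.mem_univ i) (congrFun h j)
  refine ⟨fun i => bl x i, hXblocks, 1, one_ne_zero, ?_⟩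
  funext j
  rw [show ((1 : ℂ) • ∏ i : Fin r, bl x i) = ∏ i : Fin r, bl x i from one_smul _ _]
  rw [Finset.prod_apply]
  exact (hxmu j).symm

theorem subset_zclosure {n : ℕ} (S : Set (Fin n → ℂ)) : S ⊆ zclosure S :=
  fun v hv f hf => hf v hv

theorem hprod_nonempty {N r : ℕ} {X : Set (Fin (N + 1) → ℂ)} (hXne : X.Nonempty) :
    (hprodSet X r).Nonempty := by
  obtain ⟨v, hv⟩ := hXne
  exact ⟨∏ _i : Fin r, v, fun _ => v, fun _ => hv, 1, one_ne_zero, (one_smul _ _).symm⟩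

theorem hprod_smul {N r : ℕ} {X : Set (Fin (N + 1) → ℂ)} {v : Fin (N + 1) → ℂ}
    (hv : v ∈ hprodSet X r) {c : ℂ} (hc : c ≠ 0) : c • v ∈ hprodSet X r := by
  obtain ⟨f, hf, c', hc', hcv⟩ := hv
  exact ⟨f, hf, c * c', mul_ne_zero hc hc', by rw [hcv, smul_smul]⟩

theorem zero_mem_zclosure_hprod {N r : ℕ} {X : Set (Fin (N + 1) → ℂ)} (hXne : X.Nonempty) :
    (0 : Fin (N + 1) → ℂ) ∈ zclosure (hprodSet X r) := by
  intro f hf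
  obtain ⟨v0, hv0⟩ := hprod_nonempty (r := r) hXne
  set qp : Polynomial ℂ :=
    MvPolynomial.eval₂ Polynomial.C (fun j => Polynomial.C (v0 j) * Polynomial.X) f with hqp
  have heval : ∀ c : ℂ, qp.eval c = eval (c • v0) f := by
    intro c
    rw [hqp]
    have := MvPolynomial.eval₂_comp_left (Polynomial.evalRingHom c) Polynomial.C
      (fun j => Polynomial.C (v0 j) * Polynomial.X) f
    rw [show (Polynomial.evalRingHom c) (eval₂ Polynomial.C
      (fun j => Polynomial.C (v0 j) * Polynomial.X) f) = qp.eval c from rfl] at this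
    rw [this]
    have h1 : (Polynomial.evalRingHom c).comp (Polynomial.C : ℂ →+* Polynomial ℂ)
        = RingHom.id ℂ := RingHom.ext fun a => Polynomial.eval_C
    rw [h1]
    have h2 : ((Polynomial.evalRingHom c) ∘ fun j => Polynomial.C (v0 j) * Polynomial.X)
        = fun j => (c • v0) j := by
      funext j
      show Polynomial.eval c (Polynomial.C (v0 j) * Polynomial.X) = c * v0 j
      rw [Polynomial.eval_mul, Polynomial.eval_C, Polynomial.eval_X, mul_comm]
    rw [h2, eval₂_id]
  have hzero : qp = 0 := by
    apply Polynomial.eq_zero_of_infinite_isRoot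
    apply Set.Infinite.mono (s := {c : ℂ | c ≠ 0})
    · intro c hc
      have : c • v0 ∈ hprodSet X r := hprod_smul hv0 hc
      exact (heval c).trans (hf _ this)
    · exact (Set.finite_singleton (0 : ℂ)).infinite_compl
  have := heval 0
  rw [hzero] at this
  simp only [Polynomial.eval_zero] at this
  rw [show ((0 : ℂ) • v0) = (0 : Fin (N + 1) → ℂ) from zero_smul _ _] at this
  exact this.symm

end S14

/-- if `X ⊂ ℙ^N` is irreducible of dimension `n ≤ N/2` (affine cone of
dimension `n+1`) with no point having more than `n` zero coordinates, then for `r ≥ 2`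
with `rn ≤ N` the `r`-th Hadamard power is the honest set of `r`-fold Hadamard products
(together with the cone point), and every point of it of border Hadamard rank `r` has
Hadamard rank exactly `r`. -/
theorem stmt14 (N n r : ℕ) (X : Set (Fin (N + 1) → ℂ))
    (hn : 2 * n ≤ N) (hirr : ZIrred X)
    (hdim : zdim X = (n + 1 : ℕ))
    (hne : ∀ v ∈ X, v ≠ 0)
    (hcone : ∀ v ∈ X, ∀ c : ℂ, c ≠ 0 → c • v ∈ X)
    (hcl : zclosure X = X ∪ {0})
    (hzero : ∀ v ∈ X, Nat.card {i : Fin (N + 1) // v i = 0} ≤ n)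
    (hr : 2 ≤ r) (hrn : r * n ≤ N) :
    hpow X r = hprodSet X r ∪ {0} ∧
    ∀ p : Fin (N + 1) → ℂ, p ≠ 0 → p ∈ hpow X r →
      (∀ s, 1 ≤ s → s < r → p ∉ hpow X s) → HrkEq X r p := by
  have hXne : X.Nonempty := hirr.1
  have hrr : 1 ≤ r := by omega
  have hpart1 : hpow X r = hprodSet X r ∪ {0} := by
    apply Set.Subset.antisymm
    · intro v hv
      by_cases hv0 : v = 0
      · right; rw [hv0]; rfl
      · left
        exact S14.hardDir hcone hcl hzero hrr hrn hv0 (fun f hf => hv f hf)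
    · intro v hv
      rcases hv with h | h
      · exact S14.subset_zclosure _ h
      · rw [Set.mem_singleton_iff] at h
        rw [h]
        exact S14.zero_mem_zclosure_hprod hXne
  refine ⟨hpart1, ?_⟩
  intro p hp0 hpmem hstrict
  constructor
  · have hmem2 : p ∈ hprodSet X r ∪ {0} := hpart1 ▸ hpmem
    rcases hmem2 with h | h
    · exact h
    · exact absurd (Set.mem_singleton_iff.mp h) hp0
  · intro m h1m hmr hdec
    exact hstrict m h1m hmr (S14.subset_zclosure _ hdec)
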